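/- The number of plane rooted complete n-ary trees with k internal nodes equals the n-ary Catalan number (1/(1+(n-1)k)) * binomial(nk, k). -/

import Mathlib

/-- Plane rooted complete `n`-ary trees: every internal node has exactly `n` children. -/
inductive NaryTree (n : ℕ) : Type
  | leaf : NaryTree n
  | node : (Fin n → NaryTree n) → NaryTree n

/-- Number of internal nodes (including the root, if the tree is not a leaf). -/
def NaryTree.internalNodes {n : ℕ} : NaryTree n → ℕ
  | .leaf => 0
  | .node c => 1 + ∑ i, (c i).internalNodes

namespace NaryCat

variable (n : ℕ)

/-- value of a word: n * (#true) - length -/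
def val (w : List Bool) : ℤ := n * (w.count true) - w.length

@[simp] lemma val_nil : val n [] = 0 := by simp [val]

lemma val_append (u v : List Bool) : val n (u ++ v) = val n u + val n v := by
  simp [val]; ring

lemma val_cons (b : Bool) (u : List Bool) :
    val n (b :: u) = (if b then (n : ℤ) - 1 else -1) + val n u := by
  cases b <;> simp [val, List.count_cons] <;> ring

def Bal (w : List Bool) : Prop := val n w = -1 ∧ ∀ j < w.length, 0 ≤ val n (w.take j)

instance : DecidablePred (Bal n) := fun w => by unfold Bal; infer_instance

lemma Bal.ne_nil {w : List Bool} (h : Bal n w) : w ≠ [] := by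
  rintro rfl; simpa [val] using h.1

def toList {n : ℕ} : NaryTree n → List Bool
  | .leaf => [false]
  | .node c => true :: (List.ofFn fun i => toList (c i)).flatten

lemma count_toList {n : ℕ} (t : NaryTree n) :
    (toList t).count true = t.internalNodes := by
  induction t with
  | leaf => simp [toList, NaryTree.internalNodes]
  | node c ih =>
      simp only [toList, NaryTree.internalNodes, List.count_cons, List.count_flatten]
      simp [List.map_ofFn, Function.comp, ih, List.sum_ofFn, Nat.add_comm]

lemma length_toList {n : ℕ} (t : NaryTree n) :
    (toList t).length = n * t.internalNodes + 1 := by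
  induction t with
  | leaf => simp [toList, NaryTree.internalNodes]
  | node c ih =>
      simp only [toList, NaryTree.internalNodes, List.length_cons, List.length_flatten]
      simp [List.map_ofFn, Function.comp, ih, List.sum_ofFn, Finset.sum_add_distrib,
        Nat.mul_add, Finset.mul_sum]
      ring

lemma val_toList {n : ℕ} (t : NaryTree n) : val n (toList t) = -1 := by
  simp [val, count_toList, length_toList]

lemma val_flatten_prefix (ws : List (List Bool)) (h : ∀ w ∈ ws, Bal n w) :
    ∀ j < ws.flatten.length, -(ws.length : ℤ) + 1 ≤ val n (ws.flatten.take j) := by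
  induction ws with
  | nil => simp
  | cons w ws ih =>
      intro j hj
      simp only [List.flatten_cons] at hj ⊢
      have hw : Bal n w := h w (by simp)
      rcases lt_or_ge j w.length with hlt | hle
      · rw [List.take_append_of_le_length hlt.le]
        have := hw.2 j hlt
        push_cast [List.length_cons]
        linarith
      · rw [List.take_append, List.take_of_length_le hle, val_append]
        have hne : ws ≠ [] → (0:ℤ) ≤ ws.length - 1 := by
          intro hne
          have : 1 ≤ ws.length := List.length_pos_iff.2 hne
          push_cast; omega
        rcases eq_or_ne ws [] with rfl | hne'
        · simp at hj; omega
        · have hj' : j - w.length < ws.flatten.length := by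
            rw [List.length_append] at hj; omega
          have := ih (fun u hu => h u (by simp [hu])) (j - w.length) hj'
          rw [hw.1]
          push_cast [List.length_cons] at this ⊢
          linarith

lemma val_flatten (ws : List (List Bool)) (h : ∀ w ∈ ws, Bal n w) :
    val n ws.flatten = -(ws.length : ℤ) := by
  induction ws with
  | nil => simp [val]
  | cons w ws ih =>
      simp only [List.flatten_cons, val_append, (h w (by simp)).1,
        ih (fun u hu => h u (by simp [hu]))]
      push_cast [List.length_cons]; ring


lemma bal_toList {n : ℕ} (t : NaryTree n) : Bal n (toList t) := by
  induction t with
  | leaf =>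
      constructor
      · simp [val, toList]
      · intro j hj
        simp only [toList, List.length_cons, List.length_nil] at hj
        have : j = 0 := by omega
        subst this; simp [val]
  | node c ih =>
      have hws : ∀ w ∈ List.ofFn fun i => toList (c i), Bal n w := by
        intro w hw
        rw [List.mem_ofFn] at hw
        obtain ⟨i, rfl⟩ := hw
        exact ih i
      constructor
      · exact val_toList _
      · intro j hj
        cases j with
        | zero => simp
        | succ i =>
            simp only [toList, List.length_cons] at hj
            have hi : i < (List.ofFn fun i => toList (c i)).flatten.length := by omega
            have := val_flatten_prefix n _ hws i hi
            simp only [toList, List.take_succ_cons, val_cons, if_pos rfl]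
            simp only [List.length_ofFn] at this
            have hn0 : 0 < n := by
              rcases Nat.eq_zero_or_pos n with rfl | h0
              · simp [List.ofFn_zero] at hi
              · exact h0
            have hn1 : (1:ℤ) ≤ n := by exact_mod_cast hn0
            simp only [if_true]
            linarith

lemma prefix_eq {n : ℕ} {u u' s s' : List Bool} (hu : Bal n u) (hu' : Bal n u')
    (h : u ++ s = u' ++ s') : u = u' ∧ s = s' := by
  have key : ∀ (v v' t t' : List Bool), Bal n v → Bal n v' → v ++ t = v' ++ t' →
      v.length ≤ v'.length → v = v' := by
    intro v v' t t' hv hv' heq hle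
    have h1 : v <+: v' ++ t' := heq ▸ ⟨t, rfl⟩
    have h2 : v <+: v' := List.prefix_of_prefix_length_le h1 (v'.prefix_append t') hle
    rcases eq_or_lt_of_le hle with heq' | hlt
    · exact List.IsPrefix.eq_of_length h2 heq'
    · exfalso
      have hvt : v = v'.take v.length := List.prefix_iff_eq_take.1 h2
      have h3 := hv'.2 v.length hlt
      rw [← hvt, hv.1] at h3
      omega
  rcases le_total u.length u'.length with hle | hle
  · have := key u u' s s' hu hu' h hle
    subst this
    exact ⟨rfl, List.append_cancel_left h⟩
  · have := key u' u s' s hu' hu h.symm hle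
    subst this
    exact ⟨rfl, List.append_cancel_left h⟩

lemma flatten_inj {n : ℕ} : ∀ (A B : List (List Bool)), (∀ w ∈ A, Bal n w) →
    (∀ w ∈ B, Bal n w) → A.length = B.length → A.flatten = B.flatten → A = B := by
  intro A
  induction A with
  | nil => intro B _ _ hlen _; cases B <;> simp_all
  | cons a A ih =>
      intro B hA hB hlen hj
      cases B with
      | nil => simp at hlen
      | cons b B =>
          simp only [List.flatten_cons] at hj
          obtain ⟨h1, h2⟩ := prefix_eq (hA a (by simp)) (hB b (by simp)) hj
          subst h1
          simp only [List.length_cons] at hlen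
          rw [ih B (fun w hw => hA w (by simp [hw])) (fun w hw => hB w (by simp [hw]))
            (by omega) h2]

lemma length_toList_pos {n : ℕ} (t : NaryTree n) : 0 < (toList t).length := by
  cases t <;> simp [toList]

lemma toList_inj_aux {n : ℕ} : ∀ N (t t' : NaryTree n), (toList t).length ≤ N →
    toList t = toList t' → t = t' := by
  intro N
  induction N with
  | zero => intro t t' hle _; have := length_toList_pos t; omega
  | succ N ih =>
      intro t t' hle h
      cases t with
      | leaf => cases t' with
        | leaf => rfl
        | node c' => simp [toList] at h
      | node c =>
          cases t' with
          | leaf => simp [toList] at h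
          | node c' =>
              simp only [toList, List.cons.injEq, true_and] at h
              have hA : ∀ w ∈ List.ofFn fun i => toList (c i), Bal n w := by
                intro w hw; rw [List.mem_ofFn] at hw; obtain ⟨i, rfl⟩ := hw; exact bal_toList _
              have hB : ∀ w ∈ List.ofFn fun i => toList (c' i), Bal n w := by
                intro w hw; rw [List.mem_ofFn] at hw; obtain ⟨i, rfl⟩ := hw; exact bal_toList _
              have heq := flatten_inj _ _ hA hB (by simp) h
              rw [List.ofFn_inj] at heq
              congr 1
              funext i
              have hmem : toList (c i) ∈ List.ofFn fun i => toList (c i) :=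
                List.mem_ofFn.2 ⟨i, rfl⟩
              have hlen : (toList (c i)).length ≤ N := by
                have h1 := (List.infix_of_mem_flatten hmem).length_le
                simp only [toList, List.length_cons] at hle
                omega
              exact ih (c i) (c' i) hlen (congrFun heq i)

lemma toList_injective {n : ℕ} : Function.Injective (toList (n := n)) :=
  fun t t' h => toList_inj_aux (toList t).length t t' le_rfl h

lemma val_take_succ_ge {n : ℕ} (w : List Bool) (i : ℕ) :
    val n (w.take i) - 1 ≤ val n (w.take (i + 1)) := by
  rcases lt_or_ge i w.length with hi | hi
  · rw [List.take_succ, val_append]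
    have : 0 ≤ val n (w[i]?.toList) + 1 := by
      rw [List.getElem?_eq_getElem hi]
      cases w[i] <;> simp [val] <;> omega
    omega
  · rw [List.take_of_length_le hi, List.take_of_length_le (by omega)]
    omega

lemma exists_forest {n : ℕ} : ∀ N (w : List Bool) (m : ℕ), w.length ≤ N →
    val n w = -(m : ℤ) → (∀ j < w.length, -(m : ℤ) + 1 ≤ val n (w.take j)) →
    ∃ ts : List (NaryTree n), ts.length = m ∧ (ts.map toList).flatten = w := by
  intro N
  induction N with
  | zero =>
      intro w m hlen hval _
      have hw : w = [] := List.length_eq_zero_iff.1 (by omega)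
      subst hw
      have : m = 0 := by simp [val] at hval; omega
      exact ⟨[], by simp [this]⟩
  | succ N ih =>
      intro w m hlen hval hpre
      rcases eq_or_ne w [] with rfl | hne
      · have : m = 0 := by simp [val] at hval; omega
        exact ⟨[], by simp [this]⟩
      have hwpos : 0 < w.length := List.length_pos_iff.2 hne
      have hm : 1 ≤ m := by
        by_contra hm0
        have : m = 0 := by omega
        subst this
        have := hpre 0 hwpos
        simp [val] at this
      -- find first prefix with val ≤ -1
      have hex : ∃ j, val n (w.take j) ≤ -1 := by
        refine ⟨w.length, ?_⟩
        rw [List.take_length, hval]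
        omega
      classical
      set j0 := Nat.find hex with hj0def
      have hj0 : val n (w.take j0) ≤ -1 := Nat.find_spec hex
      have hj0min : ∀ j < j0, 0 ≤ val n (w.take j) := by
        intro j hj
        have := Nat.find_min hex hj
        omega
      have hj0pos : 0 < j0 := by
        rcases Nat.eq_zero_or_pos j0 with h0 | h0
        · rw [h0] at hj0; simp [val] at hj0
        · exact h0
      have hj0le : j0 ≤ w.length := by
        by_contra hcon
        push_neg at hcon
        have := hj0min w.length hcon
        rw [List.take_length, hval] at this
        omega
      have hu1 : val n (w.take j0) = -1 := by
        have h1 := hj0min (j0 - 1) (by omega)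
        have h2 := val_take_succ_ge (n := n) w (j0 - 1)
        rw [Nat.sub_add_cancel hj0pos] at h2
        omega
      have hubal : Bal n (w.take j0) := by
        refine ⟨hu1, fun j hj => ?_⟩
        rw [List.length_take] at hj
        rw [List.take_take, min_eq_left (by omega : j ≤ j0)]
        exact hj0min j (by omega)
      rcases eq_or_lt_of_le hj0le with hfull | hlt
      · -- whole word is balanced, m = 1
        have hbal : Bal n w := by rwa [hfull, List.take_length] at hubal
        have hm1 : m = 1 := by
          rw [hbal.1] at hval
          omega
        subst hm1
        cases w with
        | nil => exact absurd rfl hne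
        | cons b rest =>
            cases b with
            | false =>
                have hrest : rest = [] := by
                  by_contra hr
                  have h1 : 1 < (false :: rest).length := by
                    simp [List.length_pos_iff.2 hr]
                  have := hbal.2 1 h1
                  simp [val, List.take_succ_cons] at this
                subst hrest
                exact ⟨[NaryTree.leaf], by simp [toList]⟩
            | true =>
                have hval' : val n rest = -(n : ℤ) := by
                  have := hbal.1
                  rw [val_cons] at this
                  simp at this
                  omega
                have hpre' : ∀ j < rest.length, -(n : ℤ) + 1 ≤ val n (rest.take j) := by
                  intro j hj
                  have := hbal.2 (j + 1) (by simpa using Nat.succ_lt_succ hj)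
                  rw [List.take_succ_cons, val_cons] at this
                  simp at this
                  omega
                obtain ⟨ts, hts1, hts2⟩ := ih rest n (by simpa using hlen) hval' hpre'
                refine ⟨[NaryTree.node fun i => ts.get (Fin.cast hts1.symm i)], by simp, ?_⟩
                simp only [List.map_cons, List.map_nil, List.flatten_cons, List.flatten_nil,
                  List.append_nil, toList]
                congr 1
                rw [← hts2]
                congr 1
                refine List.ext_get (by simp [hts1]) ?_
                intro i h1 h2
                simp [List.get_ofFn]
      · -- split w = u ++ rest
        have hrest_val : val n (w.drop j0) = -((m - 1 : ℕ) : ℤ) := by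
          have := val_append n (w.take j0) (w.drop j0)
          rw [List.take_append_drop] at this
          rw [hval, hu1] at this
          push_cast [Nat.cast_sub hm]
          omega
        have hrest_pre : ∀ j < (w.drop j0).length, -((m - 1 : ℕ) : ℤ) + 1 ≤ val n ((w.drop j0).take j) := by
          intro j hj
          rw [List.length_drop] at hj
          have h1 := hpre (j0 + j) (by omega)
          rw [List.take_add, val_append, hu1] at h1
          push_cast [Nat.cast_sub hm]
          omega
        obtain ⟨ts2, h2a, h2b⟩ := ih (w.drop j0) (m - 1) (by rw [List.length_drop]; omega) hrest_val hrest_pre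
        obtain ⟨ts1, h1a, h1b⟩ := ih (w.take j0) 1 (by rw [List.length_take]; omega)
          (by rw [hu1]; norm_num)
          (by intro j hj; have := hubal.2 j hj; omega)
        refine ⟨ts1 ++ ts2, by simp [h1a, h2a]; omega, ?_⟩
        rw [List.map_append, List.flatten_append, h1b, h2b, List.take_append_drop]

section Cycle

variable {n : ℕ} (w : List Bool)

/-- prefix values of the doubled word -/
def G (n : ℕ) (w : List Bool) (j : ℕ) : ℤ := val n ((w ++ w).take j)

lemma val_rotate (r : ℕ) : val n (w.rotate r) = val n w := by
  rw [List.rotate_eq_drop_append_take_mod, val_append, add_comm, ← val_append,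
    List.take_append_drop]

lemma G_add (r j : ℕ) (hr : r ≤ w.length) (hj : j ≤ w.length) :
    G n w (r + j) = G n w r + val n ((w.rotate r).take j) := by
  unfold G
  rw [List.take_add, val_append]
  congr 2
  have hd : (w ++ w).drop r = w.rotate r ++ w.drop r := by
    rw [List.drop_append_of_le_length hr, List.rotate_eq_drop_append_take hr,
      List.append_assoc, List.take_append_drop]
  rw [hd, List.take_append_of_le_length (by rw [List.length_rotate]; exact hj)]

lemma G_per (hw : val n w = -1) (j : ℕ) (hj : j ≤ w.length) :
    G n w (w.length + j) = G n w j - 1 := by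
  unfold G
  rw [List.take_add, List.take_append_of_le_length hj,
    List.take_left' rfl, val_append, List.drop_left' rfl, hw]
  ring

lemma bal_rotate_iff (hw : val n w = -1) (r : ℕ) (hr : r < w.length) :
    Bal n (w.rotate r) ↔ ∀ j < w.length, G n w r ≤ G n w (r + j) := by
  constructor
  · intro hb j hj
    have := hb.2 j (by rwa [List.length_rotate])
    rw [G_add w r j hr.le hj.le]
    omega
  · intro h
    refine ⟨by rw [val_rotate, hw], fun j hj => ?_⟩
    rw [List.length_rotate] at hj
    have := h j hj
    rw [G_add w r j hr.le hj.le] at this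
    omega

lemma cycle_exists (hw : val n w = -1) (hpos : 0 < w.length) :
    ∃ r, r < w.length ∧ Bal n (w.rotate r) := by
  classical
  set L := w.length with hL
  obtain ⟨M, hM⟩ := ((Finset.range L).image (G n w)).exists_min_image id
    ⟨G n w 0, Finset.mem_image.2 ⟨0, Finset.mem_range.2 hpos, rfl⟩⟩
  obtain ⟨hMmem, hMmin⟩ := hM
  obtain ⟨r0, hr0L, hr0⟩ := Finset.mem_image.1 hMmem
  rw [Finset.mem_range] at hr0L
  have hex : ∃ r, r < L ∧ G n w r = M := ⟨r0, hr0L, hr0⟩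
  set r := Nat.find hex with hrdef
  obtain ⟨hrL, hrM⟩ := Nat.find_spec hex
  have hmin : ∀ i < L, M ≤ G n w i := by
    intro i hi
    exact hMmin (G n w i) (Finset.mem_image.2 ⟨i, Finset.mem_range.2 hi, rfl⟩)
  refine ⟨r, hrL, (bal_rotate_iff w hw r hrL).2 fun j hj => ?_⟩
  rcases lt_or_ge (r + j) L with hlt | hge
  · rw [hrM]; exact hmin _ hlt
  · have hi : r + j - L < r := by omega
    have hiL : r + j - L < L := by omega
    have heq : r + j = L + (r + j - L) := by omega
    rw [heq, G_per w hw _ (by omega)]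
    have h1 : M ≤ G n w (r + j - L) := hmin _ hiL
    have h2 : G n w (r + j - L) ≠ M := fun hc => Nat.find_min hex hi ⟨hiL, hc⟩
    rw [hrM]
    omega

lemma cycle_unique (hw : val n w = -1) (r1 r2 : ℕ) (h1 : r1 < w.length)
    (h2 : r2 < w.length) (hb1 : Bal n (w.rotate r1)) (hb2 : Bal n (w.rotate r2)) :
    r1 = r2 := by
  by_contra hne
  wlog hlt : r1 < r2 generalizing r1 r2
  · exact this r2 r1 h2 h1 hb2 hb1 (Ne.symm hne) (by omega)
  have g1 := (bal_rotate_iff w hw r1 h1).1 hb1 (r2 - r1) (by omega)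
  rw [Nat.add_sub_cancel' hlt.le] at g1
  have g2 := (bal_rotate_iff w hw r2 h2).1 hb2 (w.length - (r2 - r1)) (by omega)
  have heq : r2 + (w.length - (r2 - r1)) = w.length + r1 := by omega
  rw [heq, G_per w hw r1 h1.le] at g2
  omega

end Cycle

section Counting

variable {n k : ℕ}

lemma count_rotate (w : List Bool) (r : ℕ) (b : Bool) :
    (w.rotate r).count b = w.count b := by
  rw [List.rotate_eq_drop_append_take_mod, List.count_append, Nat.add_comm,
    ← List.count_append, List.take_append_drop]

lemma bal_length {w : List Bool} (hb : Bal n w) (hc : w.count true = k) :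
    w.length = n * k + 1 := by
  have := hb.1
  rw [val, hc] at this
  omega

/-- trees with k internal nodes correspond to balanced words with k trues -/
noncomputable def treeEquiv (n k : ℕ) :
    {t : NaryTree n // t.internalNodes = k} ≃
      {w : List Bool // Bal n w ∧ w.count true = k} := by
  apply Equiv.ofBijective
    (fun t => ⟨toList t.1, bal_toList _, by rw [count_toList, t.2]⟩)
  constructor
  · rintro ⟨t1, h1⟩ ⟨t2, h2⟩ h
    simp only [Subtype.mk.injEq] at h ⊢
    exact toList_injective h
  · rintro ⟨w, hb, hc⟩
    obtain ⟨ts, hts1, hts2⟩ := exists_forest w.length w 1 le_rfl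
      (by rw [hb.1]; norm_num)
      (by intro j hj; have := hb.2 j hj; omega)
    match ts, hts1 with
    | [t], _ =>
        refine ⟨⟨t, ?_⟩, ?_⟩
        · have : toList t = w := by simpa using hts2
          rw [← count_toList, this, hc]
        · apply Subtype.ext
          simpa using hts2
    
/-- the rotation bijection -/
lemma card_words_eq :
    Nat.card {w : List Bool // w.length = n * k + 1 ∧ w.count true = k} =
      Nat.card {w : List Bool // Bal n w ∧ w.count true = k} * (n * k + 1) := by
  set L := n * k + 1 with hL
  have hval : ∀ w : List Bool, w.length = L → w.count true = k → val n w = -1 := by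
    intro w h1 h2
    rw [val, h1, h2, hL]
    push_cast
    ring
  set Φ : {w : List Bool // Bal n w ∧ w.count true = k} × Fin L →
      {w : List Bool // w.length = L ∧ w.count true = k} := fun p =>
    ⟨p.1.val.rotate (L - p.2.val),
      by rw [List.length_rotate]; exact bal_length p.1.2.1 p.1.2.2,
      by rw [count_rotate]; exact p.1.2.2⟩ with hΦ
  have hrot : ∀ (T : List Bool) (hT : T.length = L) (r : ℕ), r < L →
      (T.rotate (L - r)).rotate r = T := by
    intro T hT r hr
    rw [List.rotate_rotate, Nat.sub_add_cancel hr.le, ← hT, List.rotate_length]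
  have hbij : Function.Bijective Φ := by
    constructor
    · rintro ⟨T1, r1⟩ ⟨T2, r2⟩ h
      simp only [hΦ, Subtype.mk.injEq, Prod.mk.injEq] at h
      have hlen1 : T1.val.length = L := bal_length T1.2.1 T1.2.2
      have hlen2 : T2.val.length = L := bal_length T2.2.1 T2.2.2
      have hSlen : (T1.val.rotate (L - r1.val)).length = L := by
        rw [List.length_rotate]; exact hlen1
      have hScnt : (T1.val.rotate (L - r1.val)).count true = k := by
        rw [count_rotate]; exact T1.2.2
      have hSval : val n (T1.val.rotate (L - r1.val)) = -1 := hval _ hSlen hScnt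
      have e1 : (T1.val.rotate (L - r1.val)).rotate r1.val = T1.val :=
        hrot T1.val hlen1 r1.val r1.2
      have e2 : (T1.val.rotate (L - r1.val)).rotate r2.val = T2.val := by
        rw [h]; exact hrot T2.val hlen2 r2.val r2.2
      have hr12 : r1.val = r2.val := by
        apply cycle_unique _ hSval r1.val r2.val (by rw [hSlen]; exact r1.2)
          (by rw [hSlen]; exact r2.2)
        · rw [e1]; exact T1.2.1
        · rw [e2]; exact T2.2.1
      have hT : T1 = T2 := by
        apply Subtype.ext
        rw [← e1, ← e2, hr12]
      rw [hT, Fin.ext hr12]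
    · rintro ⟨S, hS1, hS2⟩
      have hSval : val n S = -1 := hval S hS1 hS2
      obtain ⟨r, hr, hbal⟩ := cycle_exists S hSval (by omega)
      rw [hS1] at hr
      refine ⟨⟨⟨S.rotate r, hbal, by rw [count_rotate]; exact hS2⟩, ⟨r, hr⟩⟩, ?_⟩
      apply Subtype.ext
      simp only [hΦ]
      rw [List.rotate_rotate, show r + (L - r) = L by omega, ← hS1, List.rotate_length]
  calc Nat.card {w : List Bool // w.length = L ∧ w.count true = k}
      = Nat.card ({w : List Bool // Bal n w ∧ w.count true = k} × Fin L) :=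
        (Nat.card_congr (Equiv.ofBijective Φ hbij)).symm
    _ = _ := by rw [Nat.card_prod]; simp

end Counting

lemma count_true_eq (w : List Bool) :
    w.count true = ((Finset.range w.length).filter fun i => w.getD i false = true).card := by
  induction w using List.reverseRecOn with
  | nil => simp
  | append_singleton u b ih =>
      rw [List.count_append, List.length_append, List.length_singleton,
        Finset.card_filter, Finset.sum_range_succ, ← Finset.card_filter]
      have h1 : ((Finset.range u.length).filter
          fun i => (u ++ [b]).getD i false = true).card =
          ((Finset.range u.length).filter fun i => u.getD i false = true).card := by
        congr 1
        apply Finset.filter_congr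
        intro i hi
        rw [Finset.mem_range] at hi
        rw [List.getD_append _ _ _ _ hi]
      have h2 : (u ++ [b]).getD u.length false = b := by
        rw [List.getD_eq_getElem _ _ (by simp), List.getElem_concat_length]
        rfl
      rw [h1, h2, ← ih]
      cases b <;> simp

lemma count_true_eq_fin {L : ℕ} (w : List Bool) (h : w.length = L) :
    (Finset.univ.filter fun i : Fin L => w.getD i.val false = true).card = w.count true := by
  subst h
  rw [Finset.card_filter, Fin.sum_univ_eq_sum_range
    (fun i => if w.getD i false = true then 1 else 0), ← Finset.card_filter, count_true_eq]

def wordFinsetEquiv (L k : ℕ) :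
    {w : List Bool // w.length = L ∧ w.count true = k} ≃ {S : Finset (Fin L) // S.card = k} where
  toFun p := ⟨Finset.univ.filter fun i : Fin L => p.val.getD i.val false = true,
    by rw [count_true_eq_fin p.val p.2.1, p.2.2]⟩
  invFun q := ⟨List.ofFn fun i : Fin L => decide (i ∈ q.val), by
    refine ⟨List.length_ofFn, ?_⟩
    rw [← count_true_eq_fin _ (List.length_ofFn)]
    refine Eq.trans ?_ q.2
    congr 1
    ext i
    simp only [Finset.mem_filter, Finset.mem_univ, true_and]
    rw [List.getD_eq_getElem _ _ (by simp [i.2]), List.getElem_ofFn]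
    simp⟩
  left_inv := by
    rintro ⟨w, h1, h2⟩
    apply Subtype.ext
    apply List.ext_getElem (by simp [h1])
    intro i hi1 hi2
    simp only [List.getElem_ofFn]
    simp only [Finset.mem_filter, Finset.mem_univ, true_and]
    rw [List.getD_eq_getElem _ _ (by simpa using hi2)]
    simp
  right_inv := by
    rintro ⟨S, hS⟩
    apply Subtype.ext
    ext i
    simp only [Finset.mem_filter, Finset.mem_univ, true_and]
    rw [List.getD_eq_getElem _ _ (by simp [i.2]), List.getElem_ofFn]
    simp

lemma card_words (L k : ℕ) :
    Nat.card {w : List Bool // w.length = L ∧ w.count true = k} = L.choose k := by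
  rw [Nat.card_congr (wordFinsetEquiv L k), Nat.card_eq_fintype_card,
    Fintype.card_finset_len, Fintype.card_fin]

end NaryCat


/-- The number of plane rooted complete `n`-ary trees with `k` internal nodes equals
the `n`-ary Catalan number `(1/(1+(n-1)k)) * binomial(nk, k)`. -/
theorem card_naryTree_internalNodes_eq_catalan (n k : ℕ) (hn : 2 ≤ n) :
    Nat.card {t : NaryTree n // t.internalNodes = k} =
      (n * k).choose k / (1 + (n - 1) * k) := by
  have hsub : (n - 1) * k + k = n * k := by
    have : 1 * k ≤ n * k := Nat.mul_le_mul_right k (by omega)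
    rw [Nat.sub_mul]
    omega
  have htree : Nat.card {t : NaryTree n // t.internalNodes = k} =
      Nat.card {w : List Bool // NaryCat.Bal n w ∧ w.count true = k} :=
    Nat.card_congr (NaryCat.treeEquiv n k)
  have h1 := NaryCat.card_words_eq (n := n) (k := k)
  rw [NaryCat.card_words] at h1
  set T := Nat.card {t : NaryTree n // t.internalNodes = k} with hT
  rw [← htree] at h1
  -- h1 : (n*k+1).choose k = T * (n*k+1)
  set d := 1 + (n - 1) * k with hd
  have hkey : d * ((n * k + 1).choose k) = (n * k + 1) * ((n * k).choose k) := by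
    cases k with
    | zero => simp [hd]
    | succ k' =>
        set m := n * (k' + 1) with hm
        have hk'le : k' + 1 ≤ m := le_trans le_rfl (Nat.le_mul_of_pos_left _ (by omega))
        have hc1 : (m + 1).choose (k' + 1) = m.choose k' + m.choose (k' + 1) :=
          Nat.choose_succ_succ _ _
        have hc2 := Nat.choose_succ_right_eq m k'
        have hdm : d = m - k' := by
          rw [hd]
          omega
        rw [hc1]
        calc d * (m.choose k' + m.choose (k' + 1))
            = m.choose k' * (m - k') + d * m.choose (k' + 1) := by rw [hdm]; ring
          _ = m.choose (k' + 1) * (k' + 1) + d * m.choose (k' + 1) := by rw [hc2]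
          _ = (k' + 1 + d) * m.choose (k' + 1) := by ring
          _ = (m + 1) * m.choose (k' + 1) := by
              rw [show k' + 1 + d = m + 1 from by omega]
  rw [h1] at hkey
  have hTd : T * d = (n * k).choose k := by
    have hpos : 0 < n * k + 1 := by omega
    apply Nat.eq_of_mul_eq_mul_left hpos
    calc (n * k + 1) * (T * d) = d * (T * (n * k + 1)) := by ring
      _ = (n * k + 1) * ((n * k).choose k) := hkey
  have hdpos : 0 < d := by omega
  rw [← hTd, Nat.mul_div_cancel _ hdpos]
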